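/- For every integer t ≥ 21, the integer n = 111·2^t + 1919 satisfies s(n) = s(n^2) = 16, where s is the binary digit sum. -/

import Mathlib

/-- binary digit sum -/
def s (n : ℕ) : ℕ := (Nat.digits 2 n).sum

lemma s_rec (n : ℕ) : s n = n % 2 + s (n / 2) := by
  rcases Nat.eq_zero_or_pos n with h | h
  · simp [h, s]
  · rw [s, Nat.digits_def' (by norm_num) h]
    rfl

lemma s_split (a : ℕ) : ∀ k b, b < 2 ^ k → s (a * 2 ^ k + b) = s a + s b := by
  intro k
  induction k with
  | zero =>
    intro b hb
    interval_cases b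
    simp [s]
  | succ k ih =>
    intro b hb
    have h2 : (0:ℕ) < 2 ^ k := Nat.pow_pos (by norm_num)
    have hb2 : b / 2 < 2 ^ k := by
      rw [pow_succ] at hb; omega
    have hmod : (a * 2 ^ (k + 1) + b) % 2 = b % 2 := by
      rw [pow_succ, ← mul_assoc]; omega
    have hdiv : (a * 2 ^ (k + 1) + b) / 2 = a * 2 ^ k + b / 2 := by
      rw [pow_succ, ← mul_assoc]; omega
    rw [s_rec (a * 2 ^ (k + 1) + b), hmod, hdiv, ih _ hb2, s_rec b]
    omega

theorem stmt_8 (t : ℕ) (ht : 21 ≤ t) :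
    s (111 * 2 ^ t + 1919) = 16 ∧ s ((111 * 2 ^ t + 1919) ^ 2) = 16 := by
  obtain ⟨u, rfl⟩ : ∃ u, t = u + 21 := ⟨t - 21, by omega⟩
  constructor
  · have h : (1919 : ℕ) < 2 ^ (u + 21) := by
      calc (1919:ℕ) < 2 ^ 21 := by norm_num
      _ ≤ 2 ^ (u + 21) := Nat.pow_le_pow_right (by norm_num) (by omega)
    rw [s_split 111 (u + 21) 1919 h]
    have a : s 111 = 6 := by simp [s]
    have b : s 1919 = 10 := by simp [s]
    rw [a, b]
  · have key : (111 * 2 ^ (u + 21) + 1919) ^ 2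
      = (12321 * 2 ^ (u + 20) + 213009) * 2 ^ (u + 22) + 3682561 := by
      ring
    rw [key]
    have h1 : (213009 : ℕ) < 2 ^ (u + 20) := by
      calc (213009:ℕ) < 2 ^ 20 := by norm_num
      _ ≤ 2 ^ (u + 20) := Nat.pow_le_pow_right (by norm_num) (by omega)
    have h2 : (3682561 : ℕ) < 2 ^ (u + 22) := by
      calc (3682561:ℕ) < 2 ^ 22 := by norm_num
      _ ≤ 2 ^ (u + 22) := Nat.pow_le_pow_right (by norm_num) (by omega)
    rw [s_split _ _ _ h2, s_split 12321 _ _ h1]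
    have a : s 12321 = 4 := by simp [s]
    have b : s 213009 = 5 := by simp [s]
    have c : s 3682561 = 7 := by simp [s]
    rw [a, b, c]
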